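/- arXiv:2203.12592 — 6 statements merged into one kernel-verified Lean document; each statement's English description precedes it below -/
import Mathlib

section
/- Let A be a nonempty finite set, β > 0, π̃0 : A → ℝ strictly positive, and Δr : A → ℝ. Then the supremum over all nonnegative functions π̃ : A → ℝ of ⟨π̃, Δr⟩ − (1/β)·KL[π̃:π̃0] equals (1/β)·Σ_{a∈A} π̃0(a)·(exp(β·Δr(a)) − 1), and it is attained at π̃(a) = π̃0(a)·exp(β·Δr(a)). -/
/-- Conjugate of the unnormalized KL divergence: the supremum over
nonnegative `π̃ : A → ℝ` of `⟨π̃, Δr⟩ - (1/β) KL[π̃:π̃0]` (with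
`KL[π̃:π̃0] = ∑ (π̃ log(π̃/π̃0) - π̃ + π̃0)` and the convention `0 log 0 = 0`)
equals `(1/β) ∑ π̃0(a) (exp(β Δr(a)) - 1)`, attained at
`π̃(a) = π̃0(a) exp(β Δr(a))`. -/
theorem unnormalized_kl_conjugate
    {A : Type*} [Fintype A] [Nonempty A]
    (β : ℝ) (hβ : 0 < β)
    (π₀ : A → ℝ) (hπ₀pos : ∀ a, 0 < π₀ a)
    (Δr : A → ℝ) :
    (∀ π : A → ℝ, (∀ a, 0 ≤ π a) →
      (∑ a, π a * Δr a)
          - (1 / β) * ∑ a, (π a * Real.log (π a / π₀ a) - π a + π₀ a)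
        ≤ (1 / β) * ∑ a, π₀ a * (Real.exp (β * Δr a) - 1)) ∧
    ((∑ a, (π₀ a * Real.exp (β * Δr a)) * Δr a)
          - (1 / β) * ∑ a, ((π₀ a * Real.exp (β * Δr a))
              * Real.log ((π₀ a * Real.exp (β * Δr a)) / π₀ a)
              - (π₀ a * Real.exp (β * Δr a)) + π₀ a)
        = (1 / β) * ∑ a, π₀ a * (Real.exp (β * Δr a) - 1)) := by
  constructor
  · intro π hπ
    rw [Finset.mul_sum, Finset.mul_sum, ← Finset.sum_sub_distrib]
    apply Finset.sum_le_sum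
    intro a _
    have hc := hπ₀pos a
    have hb1 : (0:ℝ) < 1/β := by positivity
    rcases eq_or_lt_of_le (hπ a) with h0 | hx
    · rw [← h0]
      have : (0:ℝ) < Real.exp (β * Δr a) := Real.exp_pos _
      simp only [zero_mul, zero_div]
      nlinarith [mul_pos hc this]
    · have h1 := Real.add_one_le_exp (β * Δr a - Real.log (π a / π₀ a))
      rw [Real.exp_sub, Real.exp_log (by positivity)] at h1
      have h2 : π a * (β * Δr a - Real.log (π a / π₀ a) + 1)
          ≤ π a * (Real.exp (β * Δr a) / (π a / π₀ a)) :=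
        mul_le_mul_of_nonneg_left h1 (le_of_lt hx)
      have h3 : π a * (Real.exp (β * Δr a) / (π a / π₀ a))
          = π₀ a * Real.exp (β * Δr a) := by
        field_simp
      rw [h3] at h2
      rw [← mul_le_mul_iff_right₀ hβ]
      have hβne : β ≠ 0 := ne_of_gt hβ
      field_simp
      nlinarith
  · have hterm : ∀ a, Real.log (π₀ a * Real.exp (β * Δr a) / π₀ a) = β * Δr a := by
      intro a
      rw [mul_comm, mul_div_assoc, div_self (ne_of_gt (hπ₀pos a)), mul_one, Real.log_exp]
    simp only [hterm]
    rw [Finset.mul_sum, Finset.mul_sum, ← Finset.sum_sub_distrib]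
    apply Finset.sum_congr rfl
    intro a _
    field_simp
    ring
end

section
/- Let A be a nonempty finite set, β > 0, and π̃, π̃0 : A → ℝ strictly positive. Then the function Δr ↦ ⟨π̃, Δr⟩ − (1/β)·Σ_{a∈A} π̃0(a)·(exp(β·Δr(a)) − 1) over all Δr : A → ℝ attains its maximum uniquely at Δr*(a) = (1/β)·log(π̃(a)/π̃0(a)), and the maximum value equals (1/β)·KL[π̃:π̃0]. -/
lemma aux_key_le (p q x : ℝ) (hp : 0 < p) (hq : 0 < q) :
    p * x - q * Real.exp x ≤ p * Real.log (p / q) - p := by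
  have hq' : q * Real.exp x = p * Real.exp (x - Real.log (p / q)) := by
    rw [Real.exp_sub, Real.exp_log (div_pos hp hq)]
    field_simp
  have h := Real.add_one_le_exp (x - Real.log (p / q))
  nlinarith [mul_le_mul_of_nonneg_left h hp.le]

lemma aux_key_eq (p q x : ℝ) (hp : 0 < p) (hq : 0 < q)
    (h : p * x - q * Real.exp x = p * Real.log (p / q) - p) :
    x = Real.log (p / q) := by
  by_contra hne
  have hq' : q * Real.exp x = p * Real.exp (x - Real.log (p / q)) := by
    rw [Real.exp_sub, Real.exp_log (div_pos hp hq)]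
    field_simp
  have hy : x - Real.log (p / q) ≠ 0 := sub_ne_zero.mpr hne
  have h2 := Real.add_one_lt_exp hy
  nlinarith [mul_lt_mul_of_pos_left h2 hp]

/-- The adversary's objective `⟨π̃, Δr⟩ - (1/β) ∑ π̃0 (exp(β Δr) - 1)`
over reward perturbations `Δr : A → ℝ` attains its maximum uniquely at
`Δr*(a) = (1/β) log(π̃(a)/π̃0(a))`, with maximum value the (scaled) unnormalized
KL divergence `(1/β) KL[π̃:π̃0]`. -/
theorem optimal_kl_reward_perturbation
    {A : Type*} [Fintype A] [Nonempty A]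
    (β : ℝ) (hβ : 0 < β)
    (π π₀ : A → ℝ) (hπpos : ∀ a, 0 < π a) (hπ₀pos : ∀ a, 0 < π₀ a) :
    (∀ Δr : A → ℝ,
      (∑ a, π a * Δr a) - (1 / β) * ∑ a, π₀ a * (Real.exp (β * Δr a) - 1)
        ≤ (1 / β) * ∑ a, (π a * Real.log (π a / π₀ a) - π a + π₀ a)) ∧
    (∀ Δr : A → ℝ,
      ((∑ a, π a * Δr a) - (1 / β) * ∑ a, π₀ a * (Real.exp (β * Δr a) - 1)
          = (1 / β) * ∑ a, (π a * Real.log (π a / π₀ a) - π a + π₀ a)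
        ↔ Δr = fun a => (1 / β) * Real.log (π a / π₀ a))) := by
  have hβ0 : β ≠ 0 := ne_of_gt hβ
  -- rewrite objective as a single sum
  have hrw : ∀ Δr : A → ℝ,
      (∑ a, π a * Δr a) - (1 / β) * ∑ a, π₀ a * (Real.exp (β * Δr a) - 1)
        = ∑ a, (π a * Δr a - (1 / β) * (π₀ a * (Real.exp (β * Δr a) - 1))) := by
    intro Δr
    rw [Finset.sum_sub_distrib, Finset.mul_sum]
  have hrhs : (1 / β) * ∑ a, (π a * Real.log (π a / π₀ a) - π a + π₀ a)
      = ∑ a, (1 / β) * (π a * Real.log (π a / π₀ a) - π a + π₀ a) := by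
    rw [Finset.mul_sum]
  have hterm : ∀ (Δr : A → ℝ) (a : A),
      π a * Δr a - (1 / β) * (π₀ a * (Real.exp (β * Δr a) - 1))
        ≤ (1 / β) * (π a * Real.log (π a / π₀ a) - π a + π₀ a) := by
    intro Δr a
    have h := aux_key_le (π a) (π₀ a) (β * Δr a) (hπpos a) (hπ₀pos a)
    have h2 : β * (π a * Δr a - (1 / β) * (π₀ a * (Real.exp (β * Δr a) - 1)))
        ≤ β * ((1 / β) * (π a * Real.log (π a / π₀ a) - π a + π₀ a)) := by
      field_simp
      nlinarith
    exact (mul_le_mul_iff_right₀ hβ).mp h2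
  constructor
  · intro Δr
    rw [hrw, hrhs]
    exact Finset.sum_le_sum fun a _ => hterm Δr a
  · intro Δr
    constructor
    · intro heq
      rw [hrw, hrhs] at heq
      have hall := (Finset.sum_eq_sum_iff_of_le (fun a _ => hterm Δr a)).mp heq
      funext a
      have ha := hall a (Finset.mem_univ a)
      have key : π a * (β * Δr a) - π₀ a * Real.exp (β * Δr a)
          = π a * Real.log (π a / π₀ a) - π a := by
        have : (1/β) * (π a * (β * Δr a) - π₀ a * Real.exp (β * Δr a) + π₀ a)
            = (1/β) * (π a * Real.log (π a / π₀ a) - π a + π₀ a) := by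
          rw [← ha]; field_simp; ring
        have h2 := mul_left_cancel₀ (show (1/β : ℝ) ≠ 0 by simp [hβ0]) this
        linarith
      have := aux_key_eq (π a) (π₀ a) (β * Δr a) (hπpos a) (hπ₀pos a) key
      field_simp
      linarith
    · intro heq
      subst heq
      rw [hrw, hrhs]
      apply Finset.sum_congr rfl
      intro a _
      have hexp : Real.exp (β * ((1 / β) * Real.log (π a / π₀ a))) = π a / π₀ a := by
        rw [show β * ((1 / β) * Real.log (π a / π₀ a)) = Real.log (π a / π₀ a) by
          field_simp]
        exact Real.exp_log (div_pos (hπpos a) (hπ₀pos a))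
      rw [hexp]
      have h0 : π₀ a ≠ 0 := ne_of_gt (hπ₀pos a)
      field_simp
      ring
end

section
/- Let A be a nonempty finite set, β > 0, α > 1, and π̃, π̃0 : A → ℝ strictly positive. Define the α-conjugate penalty Ω*_α(Δr) = (1/(β·α))·Σ_{a∈A} π̃0(a)·((max(0, 1 + (α−1)·β·Δr(a)))^{α/(α−1)} − 1). Then the function Δr ↦ ⟨π̃, Δr⟩ − Ω*_α(Δr) over all Δr : A → ℝ attains its maximum at Δr*(a) = (1/β)·log_α(π̃(a)/π̃0(a)). -/
private lemma alpha_key {β α p q : ℝ} (hβ : 0 < β) (hα : 1 < α)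
    (hp : 0 < p) (hq : 0 < q) (x : ℝ) :
    p * x - 1 / (β * α) * (q * ((max 0 (1 + (α - 1) * β * x)) ^ (α / (α - 1)) - 1))
      ≤ p * ((1 / β) * ((p / q) ^ (α - 1) - 1) / (α - 1))
        - 1 / (β * α) * (q * ((max 0 (1 + (α - 1) * β *
            ((1 / β) * ((p / q) ^ (α - 1) - 1) / (α - 1)))) ^ (α / (α - 1)) - 1)) := by
  have hβ' : β ≠ 0 := hβ.ne'
  have ha1 : (0:ℝ) < α - 1 := by linarith
  have ha1' : α - 1 ≠ 0 := ha1.ne'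
  have hα0 : (0:ℝ) < α := by linarith
  set r : ℝ := (p / q) ^ (α - 1) with hr
  have hrpos : 0 < r := Real.rpow_pos_of_pos (div_pos hp hq) _
  have hxstar : 1 + (α - 1) * β * ((1 / β) * (r - 1) / (α - 1)) = r := by
    field_simp
    ring
  rw [hxstar, max_eq_right hrpos.le]
  set t : ℝ := max 0 (1 + (α - 1) * β * x) with htd
  have ht0 : 0 ≤ t := le_max_left _ _
  have hxle : x ≤ (t - 1) / ((α - 1) * β) := by
    rw [le_div_iff₀ (by positivity)]
    have : 1 + (α - 1) * β * x ≤ t := le_max_right _ _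
    linarith
  set P : ℝ := α / (α - 1) with hP
  have hPm1 : (α - 1) * (P - 1) = 1 := by rw [hP]; field_simp; ring
  have hPpos : 0 < P := by positivity
  have hpq : P.HolderConjugate α :=
    ((Real.holderConjugate_iff_eq_conjExponent hα).mpr hP).symm
  have hrp1 : r ^ (P - 1) = p / q := by
    rw [hr, ← Real.rpow_mul (div_pos hp hq).le, hPm1, Real.rpow_one]
  have hrP : r ^ P = p / q * r := by
    calc r ^ P = r ^ (P - 1 + 1) := by ring_nf
    _ = r ^ (P - 1) * r := by rw [Real.rpow_add hrpos, Real.rpow_one]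
    _ = p / q * r := by rw [hrp1]
  have young : t * r ^ (P - 1) ≤ t ^ P / P + (r ^ (P - 1)) ^ α / α :=
    Real.young_inequality_of_nonneg ht0 (Real.rpow_nonneg hrpos.le _) hpq
  have hrpa : (r ^ (P - 1)) ^ α = r ^ P := by
    rw [← Real.rpow_mul hrpos.le]
    congr 1
    rw [hP]; field_simp; ring
  rw [hrpa, hrp1, hP] at young
  -- young : t * (p / q) ≤ t ^ P / P + r ^ P / α  (with P unfolded)
  have poly : p * α * t ≤ q * (α - 1) * t ^ P + q * (r ^ P) := by
    have h1 : q * α * (t * (p / q)) ≤ q * α * (t ^ P / (α / (α - 1)) + r ^ P / α) := by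
      apply mul_le_mul_of_nonneg_left young (by positivity)
    calc p * α * t = q * α * (t * (p / q)) := by field_simp
    _ ≤ q * α * (t ^ P / (α / (α - 1)) + r ^ P / α) := h1
    _ = q * (α - 1) * t ^ P + q * (r ^ P) := by field_simp
  have h1 : p * x ≤ p * ((t - 1) / ((α - 1) * β)) := mul_le_mul_of_nonneg_left hxle hp.le
  have key : p * ((t - 1) / ((α - 1) * β)) - 1 / (β * α) * (q * (t ^ P - 1))
      ≤ p * ((1 / β) * (r - 1) / (α - 1)) - 1 / (β * α) * (q * (r ^ P - 1)) := by
    rw [← sub_nonneg]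
    have expand : p * ((1 / β) * (r - 1) / (α - 1)) - 1 / (β * α) * (q * (r ^ P - 1))
        - (p * ((t - 1) / ((α - 1) * β)) - 1 / (β * α) * (q * (t ^ P - 1)))
        = (q * (α - 1) * t ^ P + q * (r ^ P) - p * α * t
            + (p * α * r - q * α * r ^ P)) / (β * α * (α - 1)) := by
      field_simp
      ring
    have hreq : p * α * r - q * α * (r ^ P) = 0 := by
      rw [hrP]; field_simp; ring
    rw [expand]
    apply div_nonneg _ (by positivity)
    nlinarith [poly]
  calc p * x - 1 / (β * α) * (q * (t ^ P - 1))
      ≤ p * ((t - 1) / ((α - 1) * β)) - 1 / (β * α) * (q * (t ^ P - 1)) := by linarith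
    _ ≤ _ := key

/-- For α > 1, the adversary's objective
`⟨π̃, Δr⟩ - Ω*_α(Δr)` with the α-conjugate penalty
`Ω*_α(Δr) = (1/(β α)) ∑ π̃0(a) ((max(0, 1 + (α-1) β Δr(a)))^(α/(α-1)) - 1)`
attains its maximum over `Δr : A → ℝ` at
`Δr*(a) = (1/β) log_α(π̃(a)/π̃0(a))`, where `log_α(u) = (u^(α-1) - 1)/(α-1)`. -/
theorem alpha_conjugate_maximizer
    {A : Type*} [Fintype A] [Nonempty A]
    (β : ℝ) (hβ : 0 < β)
    (α : ℝ) (hα : 1 < α)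
    (π π₀ : A → ℝ) (hπpos : ∀ a, 0 < π a) (hπ₀pos : ∀ a, 0 < π₀ a) :
    ∀ Δr : A → ℝ,
      (∑ a, π a * Δr a)
          - (1 / (β * α)) * ∑ a, π₀ a *
              ((max 0 (1 + (α - 1) * β * Δr a)) ^ (α / (α - 1)) - 1)
        ≤ (∑ a, π a * ((1 / β) * ((π a / π₀ a) ^ (α - 1) - 1) / (α - 1)))
          - (1 / (β * α)) * ∑ a, π₀ a *
              ((max 0 (1 + (α - 1) * β *
                  ((1 / β) * ((π a / π₀ a) ^ (α - 1) - 1) / (α - 1))))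
                ^ (α / (α - 1)) - 1) := by
  intro Δr
  rw [Finset.mul_sum, Finset.mul_sum, ← Finset.sum_sub_distrib, ← Finset.sum_sub_distrib]
  exact Finset.sum_le_sum fun a _ => alpha_key hβ hα (hπpos a) (hπ₀pos a) (Δr a)
end

section
/- Let A be a nonempty finite set, β > 0, α ∈ ℝ with α ∉ {0, 1}, π̃0 : A → ℝ strictly positive, and Δr : A → ℝ satisfying 1 + (α−1)·β·Δr(a) > 0 for all a ∈ A. Then the supremum over all strictly positive functions π̃ : A → ℝ of ⟨π̃, Δr⟩ − (1/β)·D_α[π̃0:π̃] equals (1/(β·α))·Σ_{a∈A} π̃0(a)·((1 + (α−1)·β·Δr(a))^{α/(α−1)} − 1), and it is attained at π̃(a) = π̃0(a)·(1 + (α−1)·β·Δr(a))^{1/(α−1)}. -/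
-- reverse AM-GM for α outside [0,1]
lemma rev_amgm {α x y : ℝ} (hx : 0 < x) (hy : 0 < y) (h : α < 0 ∨ 1 < α) :
    α * x + (1 - α) * y ≤ x ^ α * y ^ (1 - α) := by
  set K := x ^ α * y ^ (1 - α) with hKdef
  have hK : 0 < K := by positivity
  rcases h with h | h
  · -- α < 0, λ = 1/(1-α)
    have h1 : (0:ℝ) < 1 - α := by linarith
    have hlam0 : 0 ≤ 1 / (1 - α) := by positivity
    have hlam1 : 0 ≤ 1 - 1 / (1 - α) := by
      rw [sub_nonneg, div_le_one h1]; linarith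
    have hgm := Real.geom_mean_le_arith_mean2_weighted hlam0 hlam1 hK.le hx.le
      (by ring)
    have hKey : K ^ (1 / (1 - α)) * x ^ (1 - 1 / (1 - α)) = y := by
      have e1 : (1 - α) * (1 / (1 - α)) = 1 := by field_simp
      have e2 : α * (1 / (1 - α)) + (1 - 1 / (1 - α)) = 0 := by field_simp; ring
      rw [hKdef, Real.mul_rpow (by positivity) (by positivity),
        ← Real.rpow_mul hx.le, ← Real.rpow_mul hy.le, e1, Real.rpow_one,
        mul_right_comm, ← Real.rpow_add hx, e2, Real.rpow_zero, one_mul]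
    rw [hKey] at hgm
    -- y ≤ (1/(1-α)) K + (1 - 1/(1-α)) x ; multiply by (1-α)
    have h2 := mul_le_mul_of_nonneg_left hgm h1.le
    have e3 : (1 - α) * (1 / (1 - α) * K + (1 - 1 / (1 - α)) * x) = K - α * x := by
      field_simp; ring
    rw [e3] at h2
    linarith
  · -- 1 < α, λ = 1/α
    have hα : (0:ℝ) < α := by linarith
    have hlam0 : 0 ≤ 1 / α := by positivity
    have hlam1 : 0 ≤ 1 - 1 / α := by
      rw [sub_nonneg, div_le_one hα]; linarith
    have hgm := Real.geom_mean_le_arith_mean2_weighted hlam0 hlam1 hK.le hy.le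
      (by ring)
    have hKey : K ^ (1 / α) * y ^ (1 - 1 / α) = x := by
      have e1 : α * (1 / α) = 1 := by field_simp
      have e2 : (1 - α) * (1 / α) + (1 - 1 / α) = 0 := by field_simp; ring
      rw [hKdef, Real.mul_rpow (by positivity) (by positivity),
        ← Real.rpow_mul hx.le, ← Real.rpow_mul hy.le, e1, Real.rpow_one,
        mul_assoc, ← Real.rpow_add hy, e2, Real.rpow_zero, mul_one]
    rw [hKey] at hgm
    have h2 := mul_le_mul_of_nonneg_left hgm hα.le
    have e3 : α * (1 / α * K + (1 - 1 / α) * y) = K + (α - 1) * y := by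
      field_simp
    rw [e3] at h2
    linarith

-- algebraic identity with opaque K, Q
lemma key_id (β α p t Δr K Q : ℝ) (hβ : β ≠ 0) (hα0 : α ≠ 0) (hα1 : α ≠ 1) :
    t * Δr - 1 / β * (1 / (α * (1 - α)) * ((1 - α) * p + α * t - K))
      = 1 / (β * α) * (p * (Q - 1))
        - ((1 - α) * (p * Q) + α * (t * (1 + (α - 1) * β * Δr)) - K)
            / (β * α * (1 - α)) := by
  have h1 : (1 : ℝ) - α ≠ 0 := fun h => hα1 (by linarith)
  field_simp
  ring

lemma pointwise_le (β α p t Δr : ℝ) (hβ : 0 < β) (hα0 : α ≠ 0) (hα1 : α ≠ 1)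
    (hp : 0 < p) (ht : 0 < t) (hc : 0 < 1 + (α - 1) * β * Δr) :
    t * Δr - 1 / β * (1 / (α * (1 - α)) * ((1 - α) * p + α * t - p ^ (1 - α) * t ^ α))
      ≤ 1 / (β * α) * (p * ((1 + (α - 1) * β * Δr) ^ (α / (α - 1)) - 1)) := by
  set c := 1 + (α - 1) * β * Δr with hcdef
  set Q := c ^ (α / (α - 1)) with hQdef
  have hQpos : 0 < Q := Real.rpow_pos_of_pos hc _
  have hα1' : α - 1 ≠ 0 := fun h => hα1 (by linarith)
  have hKxy : (t * c) ^ α * (p * Q) ^ (1 - α) = p ^ (1 - α) * t ^ α := by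
    have e : α / (α - 1) * (1 - α) = -α := by field_simp; ring
    have hcc : c ^ α * c ^ (-α) = 1 := by
      rw [← Real.rpow_add hc]; norm_num
    rw [hQdef, Real.mul_rpow ht.le hc.le,
      Real.mul_rpow hp.le (Real.rpow_pos_of_pos hc _).le,
      ← Real.rpow_mul hc.le, e]
    linear_combination (t ^ α * p ^ (1 - α)) * hcc
  rw [key_id β α p t Δr (p ^ (1 - α) * t ^ α) Q hβ.ne' hα0 hα1, ← hcdef]
  have hnn : 0 ≤ ((1 - α) * (p * Q) + α * (t * c) - p ^ (1 - α) * t ^ α)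
      / (β * α * (1 - α)) := by
    rcases lt_trichotomy α 0 with hneg | h0 | hpos
    · have hnum := rev_amgm (mul_pos ht hc) (mul_pos hp hQpos) (Or.inl hneg)
      rw [hKxy] at hnum
      have := div_nonneg (a := -((1 - α) * (p * Q) + α * (t * c) - p ^ (1 - α) * t ^ α))
        (b := -(β * α * (1 - α))) (by linarith)
        (by nlinarith [mul_pos hβ (show (0:ℝ) < 1 - α by linarith)])
      rwa [neg_div_neg_eq] at this
    · exact absurd h0 hα0
    · rcases lt_trichotomy α 1 with h1 | h1 | h1
      · have hnum : (t * c) ^ α * (p * Q) ^ (1 - α)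
            ≤ α * (t * c) + (1 - α) * (p * Q) :=
          Real.geom_mean_le_arith_mean2_weighted hpos.le (by linarith)
            (mul_pos ht hc).le (mul_pos hp hQpos).le (by ring)
        rw [hKxy] at hnum
        exact div_nonneg (by linarith)
          (mul_pos (mul_pos hβ hpos) (show (0:ℝ) < 1 - α by linarith)).le
      · exact absurd h1 hα1
      · have hnum := rev_amgm (mul_pos ht hc) (mul_pos hp hQpos) (Or.inr h1)
        rw [hKxy] at hnum
        have := div_nonneg (a := -((1 - α) * (p * Q) + α * (t * c) - p ^ (1 - α) * t ^ α))
          (b := -(β * α * (1 - α))) (by linarith)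
          (by nlinarith [mul_pos hβ hpos])
        rwa [neg_div_neg_eq] at this
  linarith

lemma pointwise_eq (β α p Δr : ℝ) (hβ : 0 < β) (hα0 : α ≠ 0) (hα1 : α ≠ 1)
    (hp : 0 < p) (hc : 0 < 1 + (α - 1) * β * Δr) :
    (p * (1 + (α - 1) * β * Δr) ^ (1 / (α - 1))) * Δr
      - 1 / β * (1 / (α * (1 - α)) *
          ((1 - α) * p + α * (p * (1 + (α - 1) * β * Δr) ^ (1 / (α - 1)))
            - p ^ (1 - α) * (p * (1 + (α - 1) * β * Δr) ^ (1 / (α - 1))) ^ α))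
      = 1 / (β * α) * (p * ((1 + (α - 1) * β * Δr) ^ (α / (α - 1)) - 1)) := by
  set c := 1 + (α - 1) * β * Δr with hcdef
  set Q := c ^ (α / (α - 1)) with hQdef
  set t := p * c ^ (1 / (α - 1)) with htdef
  have hα1' : α - 1 ≠ 0 := fun h => hα1 (by linarith)
  have htc : t * c = p * Q := by
    have e : 1 / (α - 1) + 1 = α / (α - 1) := by field_simp; ring
    rw [htdef, hQdef, mul_assoc, ← Real.rpow_add_one hc.ne' (1 / (α - 1)), e]
  have hK : p ^ (1 - α) * t ^ α = p * Q := by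
    rw [htdef, Real.mul_rpow hp.le (Real.rpow_pos_of_pos hc _).le,
      ← Real.rpow_mul hc.le]
    have e : 1 / (α - 1) * α = α / (α - 1) := by ring
    have ep : p ^ (1 - α) * p ^ α = p := by
      rw [← Real.rpow_add hp]; norm_num
    rw [e, ← hQdef, ← mul_assoc, ep]
  rw [key_id β α p t Δr (p ^ (1 - α) * t ^ α) Q hβ.ne' hα0 hα1, ← hcdef, hK, htc]
  have : (1 - α) * (p * Q) + α * (p * Q) - p * Q = 0 := by ring
  rw [this, zero_div, sub_zero]


/-- Conjugate of the (unnormalized) α-divergence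
`D_α[π̃0:π̃] = (1/(α(1-α))) ∑ ((1-α) π̃0(a) + α π̃(a) - π̃0(a)^(1-α) π̃(a)^α)`:
for `Δr` with `1 + (α-1) β Δr(a) > 0` for all `a`, the supremum over strictly
positive `π̃ : A → ℝ` of `⟨π̃, Δr⟩ - (1/β) D_α[π̃0:π̃]` equals
`(1/(β α)) ∑ π̃0(a) ((1 + (α-1) β Δr(a))^(α/(α-1)) - 1)`, attained at
`π̃(a) = π̃0(a) (1 + (α-1) β Δr(a))^(1/(α-1))`. -/
theorem alpha_divergence_conjugate
    {A : Type*} [Fintype A] [Nonempty A]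
    (β : ℝ) (hβ : 0 < β)
    (α : ℝ) (hα0 : α ≠ 0) (hα1 : α ≠ 1)
    (π₀ : A → ℝ) (hπ₀pos : ∀ a, 0 < π₀ a)
    (Δr : A → ℝ) (hΔr : ∀ a, 0 < 1 + (α - 1) * β * Δr a) :
    (∀ π : A → ℝ, (∀ a, 0 < π a) →
      (∑ a, π a * Δr a)
          - (1 / β) * ((1 / (α * (1 - α))) *
              ∑ a, ((1 - α) * π₀ a + α * π a - π₀ a ^ (1 - α) * π a ^ α))
        ≤ (1 / (β * α)) * ∑ a, π₀ a * ((1 + (α - 1) * β * Δr a) ^ (α / (α - 1)) - 1)) ∧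
    ((∑ a, (π₀ a * (1 + (α - 1) * β * Δr a) ^ (1 / (α - 1))) * Δr a)
          - (1 / β) * ((1 / (α * (1 - α))) *
              ∑ a, ((1 - α) * π₀ a
                + α * (π₀ a * (1 + (α - 1) * β * Δr a) ^ (1 / (α - 1)))
                - π₀ a ^ (1 - α)
                  * (π₀ a * (1 + (α - 1) * β * Δr a) ^ (1 / (α - 1))) ^ α))
        = (1 / (β * α)) * ∑ a, π₀ a * ((1 + (α - 1) * β * Δr a) ^ (α / (α - 1)) - 1)) := by
  constructor
  · intro π hπ
    rw [Finset.mul_sum, Finset.mul_sum, Finset.mul_sum, ← Finset.sum_sub_distrib]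
    exact Finset.sum_le_sum fun a _ =>
      pointwise_le β α (π₀ a) (π a) (Δr a) hβ hα0 hα1 (hπ₀pos a) (hπ a) (hΔr a)
  · rw [Finset.mul_sum, Finset.mul_sum, Finset.mul_sum, ← Finset.sum_sub_distrib]
    exact Finset.sum_congr rfl fun a _ =>
      pointwise_eq β α (π₀ a) (Δr a) hβ hα0 hα1 (hπ₀pos a) (hΔr a)
end

section
/- Let A be a nonempty finite set, β > 0, α > 1, π0 a strictly positive probability distribution on A, π a strictly positive probability distribution on A, and r, Δr : A → ℝ. If Σ_{a∈A} π0(a)·(max(0, 1 + (α−1)·β·Δr(a)))^{α/(α−1)} ≤ Σ_{a∈A} π0(a)^{1−α}·π(a)^α, then ⟨π, Δr⟩ ≤ (α/β)·D_α[π0:π]; consequently ⟨π, r − Δr⟩ ≥ ⟨π, r⟩ − (α/β)·D_α[π0:π]. -/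
open Finset

/-- Pointwise Young step. -/
lemma alpha_pointwise_young (α : ℝ) (hα : 1 < α) (p0 pa x : ℝ)
    (hp0 : 0 < p0) (hpa : 0 < pa) (hx : 0 ≤ x) :
    pa * x ≤ (α - 1) / α * (p0 * x ^ (α / (α - 1))) + 1 / α * (p0 ^ (1 - α) * pa ^ α) := by
  have hα0 : (0:ℝ) < α := by linarith
  have hα1 : (0:ℝ) < α - 1 := by linarith
  have hpq : (α / (α - 1)).HolderConjugate α := by
    rw [Real.holderConjugate_iff]; constructor
    · rw [lt_div_iff₀ hα1]; linarith
    · field_simp; ring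
  have key := Real.young_inequality_of_nonneg
      (a := x * p0 ^ ((α - 1) / α)) (b := pa * p0 ^ ((1 - α) / α))
      (by positivity) (by positivity) hpq
  have e1 : (x * p0 ^ ((α - 1) / α)) * (pa * p0 ^ ((1 - α) / α)) = pa * x := by
    rw [show (x * p0 ^ ((α - 1) / α)) * (pa * p0 ^ ((1 - α) / α))
        = x * pa * (p0 ^ ((α - 1) / α) * p0 ^ ((1 - α) / α)) by ring,
      ← Real.rpow_add hp0]
    ring_nf
    rw [Real.rpow_zero]
    ring
  have e2 : (x * p0 ^ ((α - 1) / α)) ^ (α / (α - 1)) = x ^ (α / (α - 1)) * p0 := by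
    rw [Real.mul_rpow hx (by positivity), ← Real.rpow_mul hp0.le,
      show (α - 1) / α * (α / (α - 1)) = 1 by field_simp, Real.rpow_one]
  have e3 : (pa * p0 ^ ((1 - α) / α)) ^ α = pa ^ α * p0 ^ (1 - α) := by
    rw [Real.mul_rpow hpa.le (by positivity), ← Real.rpow_mul hp0.le,
      show (1 - α) / α * α = 1 - α by field_simp]
  rw [e1, e2, e3] at key
  calc pa * x ≤ x ^ (α / (α - 1)) * p0 / (α / (α - 1)) + pa ^ α * p0 ^ (1 - α) / α := key
    _ = (α - 1) / α * (p0 * x ^ (α / (α - 1))) + 1 / α * (p0 ^ (1 - α) * pa ^ α) := by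
        rw [div_div_eq_mul_div]
        ring

/-- Robustness of α-divergence regularized policies (α > 1): if
the perturbation `Δr` satisfies the feasibility constraint
`∑ π0(a) (max(0, 1 + (α-1) β Δr(a)))^(α/(α-1)) ≤ ∑ π0(a)^(1-α) π(a)^α`, then
`⟨π, Δr⟩ ≤ (α/β) D_α[π0:π]`, and hence
`⟨π, r - Δr⟩ ≥ ⟨π, r⟩ - (α/β) D_α[π0:π]`, where
`D_α[π0:π] = (1/(α(α-1))) (∑ π0(a)^(1-α) π(a)^α - 1)`. -/
theorem alpha_robustness_inequality
    {A : Type*} [Fintype A] [Nonempty A]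
    (β : ℝ) (hβ : 0 < β)
    (α : ℝ) (hα : 1 < α)
    (π0 π : A → ℝ) (hπ0pos : ∀ a, 0 < π0 a) (hπpos : ∀ a, 0 < π a)
    (hπ0sum : ∑ a, π0 a = 1) (hπsum : ∑ a, π a = 1)
    (r Δr : A → ℝ)
    (hfeas : ∑ a, π0 a * (max 0 (1 + (α - 1) * β * Δr a)) ^ (α / (α - 1))
        ≤ ∑ a, π0 a ^ (1 - α) * π a ^ α) :
    (∑ a, π a * Δr a)
        ≤ (α / β) * ((1 / (α * (α - 1))) * ((∑ a, π0 a ^ (1 - α) * π a ^ α) - 1)) ∧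
    (∑ a, π a * (r a - Δr a))
        ≥ (∑ a, π a * r a)
          - (α / β) * ((1 / (α * (α - 1))) * ((∑ a, π0 a ^ (1 - α) * π a ^ α) - 1)) := by
  have hα1 : (0:ℝ) < α - 1 := by linarith
  have hα0 : (0:ℝ) < α := by linarith
  set S := ∑ a, π0 a ^ (1 - α) * π a ^ α with hS
  -- Pointwise bound then sum
  have step : ∀ a : A, π a * (1 + (α - 1) * β * Δr a)
      ≤ (α - 1) / α * (π0 a * (max 0 (1 + (α - 1) * β * Δr a)) ^ (α / (α - 1)))
        + 1 / α * (π0 a ^ (1 - α) * π a ^ α) := by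
    intro a
    calc π a * (1 + (α - 1) * β * Δr a)
        ≤ π a * max 0 (1 + (α - 1) * β * Δr a) := by
          exact mul_le_mul_of_nonneg_left (le_max_right _ _) (hπpos a).le
      _ ≤ _ := alpha_pointwise_young α hα _ _ _ (hπ0pos a) (hπpos a) (le_max_left _ _)
  have hsum : ∑ a, π a * (1 + (α - 1) * β * Δr a) ≤ S := by
    calc ∑ a, π a * (1 + (α - 1) * β * Δr a)
        ≤ ∑ a, ((α - 1) / α * (π0 a * (max 0 (1 + (α - 1) * β * Δr a)) ^ (α / (α - 1)))
            + 1 / α * (π0 a ^ (1 - α) * π a ^ α)) := Finset.sum_le_sum fun a _ => step a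
      _ = (α - 1) / α * (∑ a, π0 a * (max 0 (1 + (α - 1) * β * Δr a)) ^ (α / (α - 1)))
            + 1 / α * S := by
          rw [Finset.sum_add_distrib, ← Finset.mul_sum, ← Finset.mul_sum]
      _ ≤ (α - 1) / α * S + 1 / α * S := by
          gcongr
      _ = S := by field_simp; ring
  have hexp : ∑ a, π a * (1 + (α - 1) * β * Δr a)
      = 1 + (α - 1) * β * ∑ a, π a * Δr a := by
    have : ∑ a, π a * (1 + (α - 1) * β * Δr a)
        = (∑ a, π a) + (α - 1) * β * ∑ a, π a * Δr a := by
      rw [Finset.mul_sum, ← Finset.sum_add_distrib]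
      congr 1; ext a; ring
    rw [this, hπsum]
  rw [hexp] at hsum
  have hmain : (∑ a, π a * Δr a) ≤ (α / β) * ((1 / (α * (α - 1))) * (S - 1)) := by
    rw [show (α / β) * ((1 / (α * (α - 1))) * (S - 1)) = (S - 1) / ((α - 1) * β) by
      field_simp]
    rw [le_div_iff₀ (by positivity)]
    nlinarith [hsum]
  refine ⟨hmain, ?_⟩
  have : ∑ a, π a * (r a - Δr a) = (∑ a, π a * r a) - ∑ a, π a * Δr a := by
    rw [← Finset.sum_sub_distrib]; congr 1; ext a; ring
  rw [ge_iff_le, this]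
  linarith
end

section
/- Let A be a nonempty finite set, β > 0, α ∈ ℝ with α ∉ {0, 1}, π0 a strictly positive probability distribution on A, Q : A → ℝ, and ψ ∈ ℝ. Suppose 1 + β·(α−1)·(Q(a) − ψ) > 0 for every a ∈ A and that π*(a) = π0(a)·(1 + β·(α−1)·(Q(a) − ψ))^{1/(α−1)} defines a probability distribution on A (i.e., Σ_{a∈A} π*(a) = 1). Then π* maximizes ⟨π, Q⟩ − (1/β)·D_α[π0:π] over all strictly positive probability distributions π on A. -/
-- Bernoulli for negative exponent: (1+s)^p ≥ 1 + p s for s > -1, p < 0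
lemma bern_neg {s p : ℝ} (hs : -1 < s) (hp : p < 0) :
    1 + p * s ≤ (1 + s) ^ p := by
  have ht : (0:ℝ) < 1 + s := by linarith
  have h1 : (1 + s) ^ p = Real.exp (Real.log (1 + s) * p) := by
    rw [Real.rpow_def_of_pos ht]
  have h2 : Real.log (1 + s) * p + 1 ≤ Real.exp (Real.log (1 + s) * p) :=
    Real.add_one_le_exp _
  have h3 : Real.log (1 + s) ≤ s := by
    have := Real.log_le_sub_one_of_pos ht
    linarith
  nlinarith [h2, h3, hp]

-- core: ((1+s)^α - 1 - α s) / (α (α-1)) ≥ 0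
lemma bern_core (α : ℝ) (hα0 : α ≠ 0) (hα1 : α ≠ 1) {s : ℝ} (hs : -1 < s) :
    0 ≤ ((1 + s) ^ α - 1 - α * s) / (α * (α - 1)) := by
  rcases lt_trichotomy α 0 with h | h | h
  · have hnum : 0 ≤ (1 + s) ^ α - 1 - α * s := by
      have := bern_neg hs h; linarith
    have hden : 0 < α * (α - 1) := by nlinarith
    positivity
  · exact absurd h hα0
  · rcases lt_trichotomy α 1 with h1 | h1 | h1
    · have hnum : (1 + s) ^ α - 1 - α * s ≤ 0 := by
        have := rpow_one_add_le_one_add_mul_self (le_of_lt hs) (le_of_lt h) (le_of_lt h1)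
        linarith
      have hden : α * (α - 1) < 0 := by nlinarith
      exact div_nonneg_of_nonpos hnum (le_of_lt hden)
    · exact absurd h1 hα1
    · have hnum : 0 ≤ (1 + s) ^ α - 1 - α * s := by
        have := one_add_mul_self_le_rpow_one_add (le_of_lt hs) (le_of_lt h1)
        linarith
      have hden : 0 < α * (α - 1) := by nlinarith
      positivity

lemma core2 (α : ℝ) (hα0 : α ≠ 0) (hα1 : α ≠ 1) {x y : ℝ} (hx : 0 < x) (hy : 0 < y) :
    0 ≤ (x ^ α - y ^ α - α * y ^ (α - 1) * (x - y)) / (α * (α - 1)) := by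
  have hs : -1 < x / y - 1 := by
    have : 0 < x / y := div_pos hx hy
    linarith
  have h := bern_core α hα0 hα1 hs
  have h1 : (1 + (x / y - 1)) = x / y := by ring
  rw [h1] at h
  have h2 : (x / y) ^ α = x ^ α / y ^ α := Real.div_rpow hx.le hy.le α
  have h3 : y ^ (α - 1) = y ^ α / y := by
    rw [Real.rpow_sub hy, Real.rpow_one]
  have hyα : 0 < y ^ α := Real.rpow_pos_of_pos hy α
  have key : (x ^ α - y ^ α - α * y ^ (α - 1) * (x - y)) / (α * (α - 1))
      = y ^ α * ((x / y) ^ α - 1 - α * (x / y - 1)) / (α * (α - 1)) := by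
    have haa : α * (α - 1) ≠ 0 := mul_ne_zero hα0 (sub_ne_zero.mpr hα1)
    rw [h2, h3]
    field_simp
  rw [key, mul_div_assoc]
  exact mul_nonneg hyα.le h

lemma point_ineq (β α : ℝ) (hβ : 0 < β) (hα0 : α ≠ 0) (hα1 : α ≠ 1)
    (p q l x y : ℝ) (hp : 0 < p) (hx : 0 < x) (hy : 0 < y)
    (hgrad : q = l + (1 / (β * (α - 1))) * (p * y ^ (α - 1))) :
    x * q - (1 / β) * (1 / (α * (α - 1))) * (p * x ^ α) - l * x
      ≤ y * q - (1 / β) * (1 / (α * (α - 1))) * (p * y ^ α) - l * y := by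
  have h := core2 α hα0 hα1 hx hy
  have hkey : 0 ≤ (p / β) * ((x ^ α - y ^ α - α * y ^ (α - 1) * (x - y)) / (α * (α - 1))) :=
    mul_nonneg (div_nonneg hp.le hβ.le) h
  have hα1' : α - 1 ≠ 0 := sub_ne_zero.mpr hα1
  have heq : (y * q - (1 / β) * (1 / (α * (α - 1))) * (p * y ^ α) - l * y)
      - (x * q - (1 / β) * (1 / (α * (α - 1))) * (p * x ^ α) - l * x)
      = (p / β) * ((x ^ α - y ^ α - α * y ^ (α - 1) * (x - y)) / (α * (α - 1))) := by
    rw [hgrad]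
    field_simp
    ring
  linarith

/-- Optimality of the α-regularized policy: if `ψ : ℝ` satisfies
`1 + β (α-1) (Q(a) - ψ) > 0` for all `a` and
`π*(a) = π0(a) (1 + β (α-1) (Q(a) - ψ))^(1/(α-1))` sums to one, then `π*`
maximizes `⟨π, Q⟩ - (1/β) D_α[π0:π]` over strictly positive probability
distributions `π`, where
`D_α[π0:π] = (1/(α(α-1))) (∑ π0(a)^(1-α) π(a)^α - 1)`. -/
theorem alpha_regularized_optimal_policy
    {A : Type*} [Fintype A] [Nonempty A]
    (β : ℝ) (hβ : 0 < β)
    (α : ℝ) (hα0 : α ≠ 0) (hα1 : α ≠ 1)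
    (π0 : A → ℝ) (hπ0pos : ∀ a, 0 < π0 a) (hπ0sum : ∑ a, π0 a = 1)
    (Q : A → ℝ) (ψ : ℝ)
    (hpos : ∀ a, 0 < 1 + β * (α - 1) * (Q a - ψ))
    (hnorm : ∑ a, π0 a * (1 + β * (α - 1) * (Q a - ψ)) ^ (1 / (α - 1)) = 1) :
    ∀ π : A → ℝ, (∀ a, 0 < π a) → ∑ a, π a = 1 →
      (∑ a, π a * Q a)
          - (1 / β) * ((1 / (α * (α - 1))) * ((∑ a, π0 a ^ (1 - α) * π a ^ α) - 1))
        ≤ (∑ a, (π0 a * (1 + β * (α - 1) * (Q a - ψ)) ^ (1 / (α - 1))) * Q a)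
          - (1 / β) * ((1 / (α * (α - 1)))
              * ((∑ a, π0 a ^ (1 - α)
                  * (π0 a * (1 + β * (α - 1) * (Q a - ψ)) ^ (1 / (α - 1))) ^ α) - 1)) := by
  intro π hπ hsum
  have hα1' : α - 1 ≠ 0 := sub_ne_zero.mpr hα1
  set l : ℝ := ψ - 1 / (β * (α - 1)) with hl
  set πs : A → ℝ := fun a => π0 a * (1 + β * (α - 1) * (Q a - ψ)) ^ (1 / (α - 1)) with hπs
  have hπspos : ∀ a, 0 < πs a := fun a =>
    mul_pos (hπ0pos a) (Real.rpow_pos_of_pos (hpos a) _)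
  -- gradient condition
  have hgrad : ∀ a, Q a = l + (1 / (β * (α - 1))) * (π0 a ^ (1 - α) * πs a ^ (α - 1)) := by
    intro a
    have ht := hpos a
    have h1 : πs a ^ (α - 1)
        = π0 a ^ (α - 1) * (1 + β * (α - 1) * (Q a - ψ)) := by
      rw [hπs]
      rw [Real.mul_rpow (hπ0pos a).le (Real.rpow_pos_of_pos ht _).le]
      rw [← Real.rpow_mul ht.le, one_div_mul_cancel hα1', Real.rpow_one]
    have h2 : π0 a ^ (1 - α) * πs a ^ (α - 1) = 1 + β * (α - 1) * (Q a - ψ) := by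
      rw [h1, ← mul_assoc, ← Real.rpow_add (hπ0pos a)]
      norm_num
    rw [h2, hl]
    field_simp
    ring
  -- pointwise comparison, summed
  have key : ∑ a, (π a * Q a - (1 / β) * (1 / (α * (α - 1))) * (π0 a ^ (1 - α) * π a ^ α) - l * π a)
      ≤ ∑ a, (πs a * Q a - (1 / β) * (1 / (α * (α - 1))) * (π0 a ^ (1 - α) * πs a ^ α) - l * πs a) :=
    Finset.sum_le_sum fun a _ =>
      point_ineq β α hβ hα0 hα1 (π0 a ^ (1 - α)) (Q a) l (π a) (πs a)
        (Real.rpow_pos_of_pos (hπ0pos a) _) (hπ a) (hπspos a) (hgrad a)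
  have expand : ∀ ρ : A → ℝ, ∑ a, ρ a = 1 →
      ∑ a, (ρ a * Q a - (1 / β) * (1 / (α * (α - 1))) * (π0 a ^ (1 - α) * ρ a ^ α) - l * ρ a)
      = (∑ a, ρ a * Q a)
        - (1 / β) * (1 / (α * (α - 1))) * (∑ a, π0 a ^ (1 - α) * ρ a ^ α) - l := by
    intro ρ hρ
    rw [Finset.sum_sub_distrib, Finset.sum_sub_distrib, ← Finset.mul_sum, ← Finset.mul_sum, hρ,
      mul_one]
  rw [expand π hsum, expand πs hnorm] at key
  have e1 : ∀ S : ℝ, (1 / β) * ((1 / (α * (α - 1))) * (S - 1))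
      = (1 / β) * (1 / (α * (α - 1))) * S - (1 / β) * (1 / (α * (α - 1))) := fun S => by ring
  rw [e1, e1]
  linarith
end
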